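/- Let $r \geq 2$ and let $\Theta_1, \Theta_2$ be endomorphisms of finite-dimensional vector spaces $W_1, W_2$ over a field of characteristic 0 such that $\Theta := \Theta_1\otimes\mathrm{id} + \mathrm{id}\otimes\Theta_2$ on $W_1\otimes W_2$ is diagonalizable. Then $\Theta_1$ and $\Theta_2$ are both diagonalizable (assuming $W_1, W_2 \neq 0$). Moreover, if additionally all eigenvalues of $\Theta$ are integers (in the prime field) and all eigenvalues of $\Theta_2$ are $0$, then all eigenvalues of $\Theta_1$ are integers. -/

import Mathlib

open scoped TensorProduct
open Polynomial

/-- An endomorphism is diagonalizable if there is a basis of eigenvectors. -/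
def LinearMap.Diagonalizable {k W : Type*} [Field k] [AddCommGroup W] [Module k W]
    (f : W →ₗ[k] W) : Prop :=
  ∃ (ι : Type) (b : Module.Basis ι k W) (μ : ι → k), ∀ i, f (b i) = μ i • b i

namespace Stmt13Aux

variable {k : Type*} [Field k]

lemma tmul_ne_zero {W₁ W₂ : Type*} [AddCommGroup W₁] [AddCommGroup W₂]
    [Module k W₁] [Module k W₂] {x : W₁} {y : W₂} (hx : x ≠ 0) (hy : y ≠ 0) :
    x ⊗ₜ[k] y ≠ 0 := by
  have : ¬ ∀ φ : Module.Dual k W₂, φ y = 0 := by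
    rw [Module.forall_dual_apply_eq_zero_iff]; exact hy
  push_neg at this
  obtain ⟨φ, hφ⟩ := this
  intro h
  have h2 := congrArg (fun t => (TensorProduct.rid k W₁)
    ((TensorProduct.map (LinearMap.id) φ) t)) h
  simp only [TensorProduct.map_tmul, LinearMap.id_coe, id_eq, TensorProduct.rid_tmul,
    map_zero] at h2
  rcases smul_eq_zero.mp h2 with h3 | h3
  · exact hφ h3
  · exact hx h3

lemma diag_of_iSup {W : Type*} [AddCommGroup W] [Module k W] [FiniteDimensional k W]
    (f : W →ₗ[k] W) (h : ⨆ μ : k, Module.End.eigenspace f μ = ⊤) :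
    f.Diagonalizable := by
  classical
  have hInt : DirectSum.IsInternal (fun μ : k => Module.End.eigenspace f μ) :=
    DirectSum.isInternal_submodule_of_iSupIndep_of_iSup_eq_top
      (Module.End.eigenspaces_iSupIndep f) h
  let v : ∀ μ : k, Module.Basis _ k (Module.End.eigenspace f μ) :=
    fun μ => Module.Basis.ofVectorSpace k _
  let B := hInt.collectedBasis v
  haveI : Fintype (Σ μ : k, Module.Basis.ofVectorSpaceIndex k (Module.End.eigenspace f μ)) :=
    FiniteDimensional.fintypeBasisIndex B
  let e := Fintype.equivFin (Σ μ : k, Module.Basis.ofVectorSpaceIndex k (Module.End.eigenspace f μ))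
  refine ⟨Fin _, B.reindex e, fun i => (e.symm i).1, fun i => ?_⟩
  have hmem : B (e.symm i) ∈ Module.End.eigenspace f (e.symm i).1 :=
    hInt.collectedBasis_mem v (e.symm i)
  rw [Module.Basis.reindex_apply]
  exact Module.End.mem_eigenspace_iff.mp hmem

lemma diag_of_isSemisimple {W : Type*} [AddCommGroup W] [Module k W] [FiniteDimensional k W]
    [IsAlgClosed k] (f : W →ₗ[k] W) (h : Module.End.IsSemisimple f) :
    f.Diagonalizable := by
  apply diag_of_iSup
  have h1 := Module.End.iSup_maxGenEigenspace_eq_top f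
  rw [← h1]
  exact iSup_congr fun μ =>
    (h.isFinitelySemisimple.maxGenEigenspace_eq_eigenspace μ).symm

lemma exists_squarefree_aeval_eq_zero {W : Type*} [AddCommGroup W] [Module k W]
    [FiniteDimensional k W] (f : W →ₗ[k] W) (h : f.Diagonalizable) :
    ∃ p : k[X], Squarefree p ∧ aeval f p = 0 := by
  classical
  obtain ⟨ι, b, μ, hb⟩ := h
  haveI : Fintype ι := FiniteDimensional.fintypeBasisIndex b
  set S : Finset k := Finset.image μ Finset.univ with hS
  refine ⟨∏ c ∈ S, (X - C c), ?_, ?_⟩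
  · refine Polynomial.Separable.squarefree ?_
    refine Polynomial.separable_prod_X_sub_C_iff'.mpr ?_
    intro i hi j hj hij
    exact hij
  · apply b.ext
    intro i
    have hm : μ i ∈ S := Finset.mem_image.mpr ⟨i, Finset.mem_univ i, rfl⟩
    rw [← Finset.prod_erase_mul S _ hm, map_mul]
    have h0 : (aeval f (X - C (μ i))) (b i) = 0 := by
      simp [Module.algebraMap_end_apply, hb i]
    rw [Module.End.mul_apply, h0, map_zero, LinearMap.zero_apply]

lemma aeval_comm {W V : Type*} [AddCommGroup W] [Module k W] [AddCommGroup V] [Module k V]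
    (j : W →ₗ[k] V) (g : W →ₗ[k] W) (Θ : V →ₗ[k] V)
    (hc : ∀ w, Θ (j w) = j (g w)) (p : k[X]) (w : W) :
    (aeval Θ p) (j w) = j ((aeval g p) w) := by
  have hpow : ∀ (n : ℕ) (w : W), (Θ ^ n) (j w) = j ((g ^ n) w) := by
    intro n
    induction n with
    | zero => intro w; simp
    | succ n ih =>
      intro w
      rw [pow_succ, pow_succ, Module.End.mul_apply, Module.End.mul_apply, hc, ih]
  induction p using Polynomial.induction_on' with
  | add p q hp hq => simp [map_add, hp, hq]
  | monomial n a =>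
    rw [aeval_monomial, aeval_monomial]
    simp only [Module.End.mul_apply, Module.algebraMap_end_apply, map_smul]
    rw [hpow n w]

/-- core: semisimplicity of a "conjugated shift". -/
lemma isSemisimple_of_conj {W V : Type*} [AddCommGroup W] [Module k W]
    [AddCommGroup V] [Module k V] [FiniteDimensional k V]
    (j : W →ₗ[k] V) (hj : Function.Injective j) (g : W →ₗ[k] W) (Θ : V →ₗ[k] V)
    (hc : ∀ w, Θ (j w) = j (g w)) (hΘ : LinearMap.Diagonalizable Θ) :
    Module.End.IsSemisimple g := by
  obtain ⟨p, hsq, hp0⟩ := exists_squarefree_aeval_eq_zero Θ hΘ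
  have hg0 : aeval g p = 0 := by
    ext w
    have h2 := aeval_comm j g Θ hc p w
    rw [hp0] at h2
    simp only [LinearMap.zero_apply] at h2 ⊢
    exact hj (by rw [map_zero]; exact h2.symm)
  exact Module.End.isSemisimple_of_squarefree_aeval_eq_zero hsq hg0

end Stmt13Aux

/-- Over an algebraically closed field `k` of characteristic `0`, if the Kronecker
sum `Θ = Θ₁ ⊗ id + id ⊗ Θ₂` on `W₁ ⊗ W₂` (with `W₁, W₂` nonzero finite-dimensional) is
diagonalizable, then both `Θ₁` and `Θ₂` are diagonalizable; moreover the eigenvalues of `Θ` are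
exactly the sums `α + β` of eigenvalues of `Θ₁` and `Θ₂`, so if all eigenvalues of `Θ` are
integers and all eigenvalues of `Θ₂` are `0`, then all eigenvalues of `Θ₁` are integers. -/
theorem stmt13 (k : Type*) [Field k] [IsAlgClosed k] [CharZero k]
    (W₁ W₂ : Type*) [AddCommGroup W₁] [AddCommGroup W₂] [Module k W₁] [Module k W₂]
    [FiniteDimensional k W₁] [FiniteDimensional k W₂] [Nontrivial W₁] [Nontrivial W₂]
    (Θ₁ : W₁ →ₗ[k] W₁) (Θ₂ : W₂ →ₗ[k] W₂)
    (hdiag : LinearMap.Diagonalizable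
      (TensorProduct.map Θ₁ LinearMap.id + TensorProduct.map LinearMap.id Θ₂)) :
    LinearMap.Diagonalizable Θ₁ ∧ LinearMap.Diagonalizable Θ₂ ∧
    (∀ μ : k,
      Module.End.HasEigenvalue
          (TensorProduct.map Θ₁ LinearMap.id + TensorProduct.map LinearMap.id Θ₂) μ ↔
        ∃ α β : k, Module.End.HasEigenvalue Θ₁ α ∧ Module.End.HasEigenvalue Θ₂ β ∧
          μ = α + β) ∧
    ((∀ μ : k, Module.End.HasEigenvalue
          (TensorProduct.map Θ₁ LinearMap.id + TensorProduct.map LinearMap.id Θ₂) μ →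
          ∃ n : ℤ, μ = (n : k)) →
      (∀ β : k, Module.End.HasEigenvalue Θ₂ β → β = 0) →
      ∀ α : k, Module.End.HasEigenvalue Θ₁ α → ∃ n : ℤ, α = (n : k)) := by
  classical
  set Θt := TensorProduct.map Θ₁ LinearMap.id + TensorProduct.map LinearMap.id Θ₂ with hΘt
  -- eigenvectors for Θ₂ and Θ₁
  obtain ⟨β₀, hβ₀⟩ := Module.End.exists_eigenvalue Θ₂
  obtain ⟨v, hv⟩ := hβ₀.exists_hasEigenvector
  obtain ⟨α₀, hα₀⟩ := Module.End.exists_eigenvalue Θ₁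
  obtain ⟨x₀, hx₀⟩ := hα₀.exists_hasEigenvector
  -- part 1 : Θ₁ diagonalizable
  have hdiag₁ : LinearMap.Diagonalizable Θ₁ := by
    let j : W₁ →ₗ[k] W₁ ⊗[k] W₂ := (TensorProduct.mk k W₁ W₂).flip v
    have hj : ∀ w, j w = w ⊗ₜ[k] v := fun w => rfl
    have hjinj : Function.Injective j := by
      intro a b hab
      by_contra hne
      refine Stmt13Aux.tmul_ne_zero (k := k) (sub_ne_zero.mpr hne) hv.2 ?_
      rw [TensorProduct.sub_tmul, ← hj a, ← hj b, hab, sub_self]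
    have hcomm : ∀ w, Θt (j w) = j ((Θ₁ + β₀ • (LinearMap.id : W₁ →ₗ[k] W₁)) w) := by
      intro w
      rw [hj, hj, hΘt]
      simp only [LinearMap.add_apply, TensorProduct.map_tmul, LinearMap.id_apply,
        LinearMap.smul_apply, hv.apply_eq_smul, TensorProduct.add_tmul,
        TensorProduct.tmul_smul, TensorProduct.smul_tmul']
    have hgss := Stmt13Aux.isSemisimple_of_conj j hjinj _ Θt hcomm hdiag
    have hshift : (Θ₁ + β₀ • (LinearMap.id : W₁ →ₗ[k] W₁)) - algebraMap k (Module.End k W₁) β₀ = Θ₁ := by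
      ext w
      simp [Module.algebraMap_end_apply]
    have hss : Module.End.IsSemisimple Θ₁ := by
      rw [← hshift]
      exact Module.End.isSemisimple_sub_algebraMap_iff.mpr hgss
    exact Stmt13Aux.diag_of_isSemisimple Θ₁ hss
  -- part 2 : Θ₂ diagonalizable
  have hdiag₂ : LinearMap.Diagonalizable Θ₂ := by
    let j : W₂ →ₗ[k] W₁ ⊗[k] W₂ := TensorProduct.mk k W₁ W₂ x₀
    have hj : ∀ u, j u = x₀ ⊗ₜ[k] u := fun u => rfl
    have hjinj : Function.Injective j := by
      intro a b hab
      by_contra hne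
      refine Stmt13Aux.tmul_ne_zero (k := k) hx₀.2 (sub_ne_zero.mpr hne) ?_
      rw [TensorProduct.tmul_sub, ← hj a, ← hj b, hab, sub_self]
    have hcomm : ∀ u, Θt (j u) = j ((Θ₂ + α₀ • (LinearMap.id : W₂ →ₗ[k] W₂)) u) := by
      intro u
      rw [hj, hj, hΘt]
      simp only [LinearMap.add_apply, TensorProduct.map_tmul, LinearMap.id_apply,
        LinearMap.smul_apply, hx₀.apply_eq_smul, TensorProduct.tmul_add,
        TensorProduct.tmul_smul, TensorProduct.smul_tmul']
      rw [add_comm]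
    have hgss := Stmt13Aux.isSemisimple_of_conj j hjinj _ Θt hcomm hdiag
    have hshift : (Θ₂ + α₀ • (LinearMap.id : W₂ →ₗ[k] W₂)) - algebraMap k (Module.End k W₂) α₀ = Θ₂ := by
      ext u
      simp [Module.algebraMap_end_apply]
    have hss : Module.End.IsSemisimple Θ₂ := by
      rw [← hshift]
      exact Module.End.isSemisimple_sub_algebraMap_iff.mpr hgss
    exact Stmt13Aux.diag_of_isSemisimple Θ₂ hss
  -- part 3 : eigenvalues
  obtain ⟨ι₁, b₁, μ₁, hb₁⟩ := hdiag₁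
  obtain ⟨ι₂, b₂, μ₂, hb₂⟩ := hdiag₂
  haveI : Fintype ι₁ := FiniteDimensional.fintypeBasisIndex b₁
  haveI : Fintype ι₂ := FiniteDimensional.fintypeBasisIndex b₂
  let B := b₁.tensorProduct b₂
  let ν : ι₁ × ι₂ → k := fun q => μ₁ q.1 + μ₂ q.2
  have hB : ∀ q : ι₁ × ι₂, Θt (B q) = ν q • B q := by
    rintro ⟨i, j⟩
    show Θt (B (i, j)) = (μ₁ i + μ₂ j) • B (i, j)
    rw [hΘt]
    simp only [B, Module.Basis.tensorProduct_apply, LinearMap.add_apply, TensorProduct.map_tmul,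
      LinearMap.id_apply, hb₁, hb₂, TensorProduct.tmul_smul, TensorProduct.smul_tmul',
      add_smul]
  have hval₁ : ∀ i, Module.End.HasEigenvalue Θ₁ (μ₁ i) := fun i =>
    Module.End.hasEigenvalue_of_hasEigenvector
      ⟨Module.End.mem_eigenspace_iff.mpr (hb₁ i), b₁.ne_zero i⟩
  have hval₂ : ∀ i, Module.End.HasEigenvalue Θ₂ (μ₂ i) := fun i =>
    Module.End.hasEigenvalue_of_hasEigenvector
      ⟨Module.End.mem_eigenspace_iff.mpr (hb₂ i), b₂.ne_zero i⟩
  have hiff : ∀ μ : k, Module.End.HasEigenvalue Θt μ ↔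
      ∃ α β : k, Module.End.HasEigenvalue Θ₁ α ∧ Module.End.HasEigenvalue Θ₂ β ∧
        μ = α + β := by
    intro μ
    constructor
    · intro hμ
      obtain ⟨t, ht⟩ := hμ.exists_hasEigenvector
      have e1 : Θt t = ∑ q : ι₁ × ι₂, (ν q * B.repr t q) • B q := by
        conv_lhs => rw [← B.sum_repr t]
        rw [map_sum]
        refine Finset.sum_congr rfl fun q _ => ?_
        rw [map_smul, hB q, smul_smul, mul_comm]
      have e2 : Θt t = ∑ q : ι₁ × ι₂, (μ * B.repr t q) • B q := by
        rw [ht.apply_eq_smul]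
        conv_lhs => rw [← B.sum_repr t]
        rw [Finset.smul_sum]
        refine Finset.sum_congr rfl fun q _ => ?_
        rw [smul_smul]
      have e3 : (∑ q : ι₁ × ι₂, (ν q * B.repr t q) • B q)
          = ∑ q : ι₁ × ι₂, (μ * B.repr t q) • B q := e1.symm.trans e2
      have e4 : (fun q : ι₁ × ι₂ => ν q * B.repr t q)
          = fun q => μ * B.repr t q := by
        have l := congrArg (fun z => (B.repr z : (ι₁ × ι₂) → k)) e3
        simpa only [B.repr_sum_self] using l
      obtain ⟨q, hq⟩ : ∃ q, B.repr t q ≠ 0 := by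
        by_contra hc
        push_neg at hc
        exact ht.2 (B.repr.injective (by ext q; simp [hc q]))
      have : ν q = μ := mul_right_cancel₀ hq (congrFun e4 q)
      exact ⟨μ₁ q.1, μ₂ q.2, hval₁ q.1, hval₂ q.2, this.symm⟩
    · rintro ⟨α, β, hα, hβ, rfl⟩
      obtain ⟨x, hx⟩ := hα.exists_hasEigenvector
      obtain ⟨y, hy⟩ := hβ.exists_hasEigenvector
      refine Module.End.hasEigenvalue_of_hasEigenvector (x := x ⊗ₜ[k] y)
        ⟨Module.End.mem_eigenspace_iff.mpr ?_, Stmt13Aux.tmul_ne_zero hx.2 hy.2⟩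
      show Θt (x ⊗ₜ[k] y) = (α + β) • (x ⊗ₜ[k] y)
      rw [hΘt]
      simp only [LinearMap.add_apply, TensorProduct.map_tmul, LinearMap.id_apply,
        hx.apply_eq_smul, hy.apply_eq_smul, TensorProduct.tmul_smul,
        TensorProduct.smul_tmul', add_smul]
  refine ⟨⟨ι₁, b₁, μ₁, hb₁⟩, ⟨ι₂, b₂, μ₂, hb₂⟩, hiff, ?_⟩
  -- part 4
  intro hint hzero α hα
  obtain ⟨n, hn⟩ := hint (α + β₀) ((hiff (α + β₀)).mpr ⟨α, β₀, hα, hβ₀, rfl⟩)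
  refine ⟨n, ?_⟩
  rw [hzero β₀ hβ₀, add_zero] at hn
  exact hn
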